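/- Let κ be a regular uncountable cardinal, G an abelian group with a filtration ⟨G_i : i < κ⟩, and h : H → G a surjective homomorphism of abelian groups. Assume that G/G_{i+1} is κ-free for every i < κ. Let P_{h,H,G} be the partial order whose conditions are the liftings q (with respect to h) whose domain is a subgroup D of G of cardinality < κ with G/D κ-free, ordered by extension. Then for every ordinal α < κ the set of conditions q such that the domain of q equals G_{i+1} for some i with α ≤ i < κ is dense in P_{h,H,G}: every condition has an extension in this set. -/

import Mathlib

universe u

/-- Let `κ` be a regular uncountable cardinal, `⟨G_i : i < κ⟩` a filtration of the abelian
group `G`, and `h : H → G` a surjective homomorphism such that `G/G_{i+1}` is `κ`-free for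
every `i < κ`.  The forcing notion `P_{h,H,G}` consists of liftings `q : D → H` (i.e.
`h ∘ q = id_D`) whose domain `D` is a subgroup of `G` of cardinality `< κ` with `G/D`
`κ`-free, ordered by extension.  Then for every `α < κ`, every condition `(D, q)` has an
extension whose domain is `G_{i+1}` for some `i` with `α ≤ i < κ`. -/
theorem stmt7 {H G : Type u} [AddCommGroup H] [AddCommGroup G]
    (κ : Cardinal.{u}) (hreg : κ.IsRegular) (hunc : Cardinal.aleph0 < κ)
    (Gf : Ordinal.{u} → AddSubgroup G)
    (hmono : ∀ i j : Ordinal.{u}, i ≤ j → j < κ.ord → Gf i ≤ Gf j)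
    (hcard : ∀ i < κ.ord, Cardinal.mk (Gf i) < κ)
    (hcont : ∀ i < κ.ord, Order.IsSuccLimit i → Gf i = ⨆ j : Ordinal.{u}, ⨆ _ : j < i, Gf j)
    (hunion : ∀ x : G, ∃ i < κ.ord, x ∈ Gf i)
    (h : H →+ G) (hsurj : Function.Surjective h)
    (hfree : ∀ i < κ.ord, ∀ B : AddSubgroup (G ⧸ Gf (i + 1)),
      Cardinal.mk B < κ → Module.Free ℤ B)
    (α : Ordinal.{u}) (hα : α < κ.ord)
    (D : AddSubgroup G) (q : D →+ H) (hq : ∀ x : D, h (q x) = (x : G))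
    (hDcard : Cardinal.mk D < κ)
    (hDfree : ∀ B : AddSubgroup (G ⧸ D), Cardinal.mk B < κ → Module.Free ℤ B) :
    ∃ i : Ordinal.{u}, α ≤ i ∧ i < κ.ord ∧
      ∃ (hle : D ≤ Gf (i + 1)) (q' : Gf (i + 1) →+ H),
        (∀ x : Gf (i + 1), h (q' x) = (x : G)) ∧
        ∀ (x : G) (hx : x ∈ D), q' ⟨x, hle hx⟩ = q ⟨x, hx⟩ := by
  classical
  have hord : Order.IsSuccLimit κ.ord := Cardinal.isSuccLimit_ord hreg.aleph0_le
  -- choose indices for elements of D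
  choose ix hix1 hix2 using fun x : D => hunion (x : G)
  have hsup : iSup ix < κ.ord :=
    Cardinal.iSup_lt_ord_of_isRegular hreg hDcard hix1
  set i : Ordinal.{u} := max α (iSup ix) with hi
  have hiα : α ≤ i := le_max_left _ _
  have hilt : i < κ.ord := max_lt hα hsup
  have hsucc : i + 1 < κ.ord := hord.succ_lt hilt
  have hle : D ≤ Gf (i + 1) := by
    intro x hx
    exact hmono (ix ⟨x, hx⟩) (i + 1)
      (le_trans (le_trans (Ordinal.le_iSup ix ⟨x, hx⟩) (le_max_right _ _))
        (le_of_lt (Order.lt_succ i))) hsucc (hix2 ⟨x, hx⟩)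
  refine ⟨i, hiα, hilt, hle, ?_⟩
  set K := Gf (i + 1) with hK
  -- map to G/D
  set π : K →+ G ⧸ D := (QuotientAddGroup.mk' D).comp K.subtype with hπ
  set W : AddSubgroup (G ⧸ D) := π.range with hW
  set πW : K →+ W := π.rangeRestrict with hπW
  have hπWsurj : Function.Surjective πW := π.rangeRestrict_surjective
  have hWcard : Cardinal.mk W < κ :=
    lt_of_le_of_lt (Cardinal.mk_le_of_surjective hπWsurj) (hcard _ hsucc)
  have hWfree : Module.Free ℤ W := hDfree W hWcard
  have hWproj : Module.Projective ℤ W := Module.Projective.of_free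
  -- splitting s : W → K
  obtain ⟨s, hs⟩ := Module.projective_lifting_property πW.toIntLinearMap
    (LinearMap.id : W →ₗ[ℤ] W) hπWsurj
  have hs' : ∀ w : W, πW (s w) = w := fun w => LinearMap.congr_fun hs w
  -- lifting ℓ : W → H of the inclusion composed with s
  obtain ⟨l, hl⟩ := Module.projective_lifting_property h.toIntLinearMap
    (K.subtype.toIntLinearMap ∘ₗ s) hsurj
  have hl' : ∀ w : W, h (l w) = ((s w : K) : G) := fun w => LinearMap.congr_fun hl w
  -- key membership: x - s(πW x) ∈ D
  have hmem : ∀ x : K, (x : G) - ((s (πW x) : K) : G) ∈ D := by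
    intro x
    have h1 : (QuotientAddGroup.mk' D) ((x : G) - ((s (πW x) : K) : G)) = 0 := by
      have h2 : ((πW x : G ⧸ D)) = (QuotientAddGroup.mk' D) (x : G) := rfl
      have h3 : ((πW (s (πW x)) : G ⧸ D)) = (QuotientAddGroup.mk' D) ((s (πW x) : K) : G) := rfl
      rw [map_sub, ← h2, ← h3, hs' (πW x), sub_self]
    exact (QuotientAddGroup.eq_zero_iff _).mp h1
  -- define the extension
  set e : K → D := fun x => ⟨(x : G) - ((s (πW x) : K) : G), hmem x⟩ with he
  have headd : ∀ x y : K, e (x + y) = e x + e y := by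
    intro x y
    apply Subtype.ext
    show ((x + y : K) : G) - _ = ((x : G) - _) + ((y : G) - _)
    rw [map_add πW, map_add s]
    push_cast
    abel
  set q' : K →+ H := AddMonoidHom.mk' (fun x => q (e x) + l (πW x)) (by
    intro x y
    show q (e (x + y)) + l (πW (x + y)) = (q (e x) + l (πW x)) + (q (e y) + l (πW y))
    rw [headd, map_add q, map_add πW, map_add l]
    abel) with hq'
  refine ⟨q', ?_, ?_⟩
  · intro x
    show h (q (e x) + l (πW x)) = (x : G)
    rw [map_add, hq, hl']
    show ((x : G) - _) + _ = (x : G)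
    abel
  · intro x hx
    have hπ0 : πW ⟨x, hle hx⟩ = 0 := by
      apply Subtype.ext
      show π ⟨x, hle hx⟩ = 0
      exact (QuotientAddGroup.eq_zero_iff _).mpr hx
    show q (e ⟨x, hle hx⟩) + l (πW ⟨x, hle hx⟩) = q ⟨x, hx⟩
    have he0 : e ⟨x, hle hx⟩ = ⟨x, hx⟩ := by
      apply Subtype.ext
      show x - ((s (πW ⟨x, hle hx⟩) : K) : G) = x
      rw [hπ0, map_zero s]
      show x - ((0 : K) : G) = x
      simp
    rw [he0, hπ0, map_zero l, add_zero]
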